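/- arXiv:1202.6562 — 2 statements merged into one kernel-verified Lean document; each statement's English description precedes it below -/
import Mathlib

section
/- Let E ∈ R^{d×n} and k ≥ 1. A pair (d̂, α̂) with ‖d̂‖₂ = 1, ‖α̂‖₀ ≤ k, and Eα̂ ≠ 0 minimizes ‖E − dαᵀ‖_F² over {(d,α) : ‖d‖₂ = 1, ‖α‖₀ ≤ k} if and only if ŵ = α̂/‖α̂‖₂ maximizes wᵀEᵀEw over {w ∈ R^n : ‖w‖₂ = 1, ‖w‖₀ ≤ k}, with d̂ = Eŵ/‖Eŵ‖₂ and α̂ = ‖Eŵ‖₂·ŵ. -/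
open Matrix BigOperators

noncomputable def frob2 {d n : ℕ} (M : Matrix (Fin d) (Fin n) ℝ) : ℝ :=
  ∑ i, ∑ j, (M i j) ^ 2

noncomputable def enorm2 {n : ℕ} (v : Fin n → ℝ) : ℝ :=
  Real.sqrt (∑ i, v i ^ 2)

noncomputable def spars {n : ℕ} (v : Fin n → ℝ) : ℕ :=
  Nat.card {i : Fin n // v i ≠ 0}

lemma enorm2_nonneg {n : ℕ} (v : Fin n → ℝ) : 0 ≤ enorm2 v := Real.sqrt_nonneg _

lemma sq_enorm2 {n : ℕ} (v : Fin n → ℝ) : enorm2 v ^ 2 = ∑ i, v i ^ 2 :=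
  Real.sq_sqrt (by positivity)

lemma enorm2_eq_zero {n : ℕ} {v : Fin n → ℝ} (h : enorm2 v = 0) : v = 0 := by
  have h2 : ∑ i, v i ^ 2 = 0 := by
    have := sq_enorm2 v; rw [h] at this; simpa using this.symm
  funext i
  have := (Finset.sum_eq_zero_iff_of_nonneg (fun i _ => sq_nonneg (v i))).1 h2 i (by simp)
  exact pow_eq_zero_iff (by norm_num) |>.1 this

lemma enorm2_pos {n : ℕ} {v : Fin n → ℝ} (h : v ≠ 0) : 0 < enorm2 v :=
  lt_of_le_of_ne (enorm2_nonneg v) (fun h' => h (enorm2_eq_zero h'.symm))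

lemma spars_smul {n : ℕ} (c : ℝ) (hc : c ≠ 0) (v : Fin n → ℝ) :
    spars (fun j => c * v j) = spars v := by
  unfold spars
  apply Nat.card_congr
  exact Equiv.subtypeEquivRight (fun i => by simp [hc])

lemma cs {n : ℕ} (u v : Fin n → ℝ) : u ⬝ᵥ v ≤ enorm2 u * enorm2 v :=
  Real.sum_mul_le_sqrt_mul_sqrt _ _ _

-- quadratic form
lemma quad_eq {d n : ℕ} (E : Matrix (Fin d) (Fin n) ℝ) (v : Fin n → ℝ) :
    v ⬝ᵥ (Eᵀ * E).mulVec v = ∑ i, (E.mulVec v i) ^ 2 := by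
  rw [← Matrix.mulVec_mulVec, Matrix.dotProduct_mulVec, Matrix.vecMul_transpose]
  simp [dotProduct, sq]

lemma frob2_expand {d n : ℕ} (E : Matrix (Fin d) (Fin n) ℝ) (u : Fin d → ℝ) (a : Fin n → ℝ) :
    frob2 (E - Matrix.vecMulVec u a)
      = frob2 E - 2 * (u ⬝ᵥ E.mulVec a) + (∑ i, u i ^ 2) * (∑ j, a j ^ 2) := by
  unfold frob2
  have h1 : u ⬝ᵥ E.mulVec a = ∑ i, ∑ j, u i * (E i j * a j) := by
    simp [dotProduct, Matrix.mulVec, Finset.mul_sum]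
  have h2 : (∑ i, u i ^ 2) * (∑ j, a j ^ 2) = ∑ i, ∑ j, u i ^ 2 * a j ^ 2 := by
    rw [Finset.sum_mul_sum]
  rw [h1, h2, Finset.mul_sum, ← Finset.sum_sub_distrib, ← Finset.sum_add_distrib]
  refine Finset.sum_congr rfl fun i _ => ?_
  rw [Finset.mul_sum, ← Finset.sum_sub_distrib, ← Finset.sum_add_distrib]
  refine Finset.sum_congr rfl fun j _ => ?_
  simp [Matrix.vecMulVec_apply]
  ring

lemma cs_eq {n : ℕ} {u y : Fin n → ℝ} (hu : ∑ i, u i ^ 2 = 1) (hy : y ≠ 0)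
    (h : u ⬝ᵥ y = enorm2 y) : u = fun i => y i / enorm2 y := by
  have hr : 0 < enorm2 y := enorm2_pos hy
  have hsq : ∑ i, y i ^ 2 = enorm2 y ^ 2 := (sq_enorm2 y).symm
  have key : ∑ i, (u i - y i / enorm2 y) ^ 2 = 0 := by
    have e1 : ∑ i, (u i - y i / enorm2 y) ^ 2
        = (∑ i, u i ^ 2) - 2 / enorm2 y * ∑ i, u i * y i + (1 / enorm2 y ^ 2) * ∑ i, y i ^ 2 := by
      rw [Finset.mul_sum, Finset.mul_sum, ← Finset.sum_sub_distrib, ← Finset.sum_add_distrib]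
      exact Finset.sum_congr rfl fun i _ => by ring
    have h' : ∑ i, u i * y i = enorm2 y := h
    rw [e1, hu, h', hsq]
    field_simp
    norm_num
  funext i
  have h0 := (Finset.sum_eq_zero_iff_of_nonneg (fun i _ => sq_nonneg _)).1 key i (by simp)
  have h1 := pow_eq_zero_iff (two_ne_zero) |>.1 h0
  linarith [h1]
lemma quad_enorm2 {d n : ℕ} (E : Matrix (Fin d) (Fin n) ℝ) (v : Fin n → ℝ) :
    v ⬝ᵥ (Eᵀ * E).mulVec v = enorm2 (E.mulVec v) ^ 2 := by
  rw [quad_eq, sq_enorm2]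

lemma enorm2_smul {n : ℕ} (c : ℝ) (hc : 0 ≤ c) (v : Fin n → ℝ) :
    enorm2 (fun i => c * v i) = c * enorm2 v := by
  unfold enorm2
  have : ∑ i, (c * v i) ^ 2 = c ^ 2 * ∑ i, v i ^ 2 := by
    rw [Finset.mul_sum]; exact Finset.sum_congr rfl fun i _ => by ring
  rw [this, Real.sqrt_mul (sq_nonneg c), Real.sqrt_sq hc]

lemma enorm2_one {n : ℕ} {v : Fin n → ℝ} (hv : ∑ i, v i ^ 2 = 1) : enorm2 v = 1 := by
  unfold enorm2; rw [hv]; exact Real.sqrt_one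

lemma unit_normalize {n : ℕ} {v : Fin n → ℝ} (hv : v ≠ 0) :
    ∑ i, (v i / enorm2 v) ^ 2 = 1 := by
  have h := enorm2_pos hv
  have : ∑ i, (v i / enorm2 v) ^ 2 = (∑ i, v i ^ 2) / enorm2 v ^ 2 := by
    rw [Finset.sum_div]; exact Finset.sum_congr rfl fun i _ => by ring
  rw [this, ← sq_enorm2 v]
  field_simp

lemma spars_div {n : ℕ} (v : Fin n → ℝ) (c : ℝ) (hc : c ≠ 0) :
    spars (fun j => v j / c) = spars v := by
  have : (fun j => v j / c) = fun j => c⁻¹ * v j := by funext j; rw [div_eq_inv_mul]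
  rw [this, spars_smul _ (inv_ne_zero hc)]

lemma lower_bound {d n : ℕ} (E : Matrix (Fin d) (Fin n) ℝ) (u : Fin d → ℝ) (a : Fin n → ℝ)
    (hu : ∑ i, u i ^ 2 = 1) (s : ℝ) (hs0 : 0 ≤ s)
    (hr : enorm2 (E.mulVec a) ≤ s * enorm2 a) :
    frob2 E - s ^ 2 ≤ frob2 (E - Matrix.vecMulVec u a) := by
  rw [frob2_expand, hu, one_mul, ← sq_enorm2 a]
  have hcs : u ⬝ᵥ E.mulVec a ≤ enorm2 u * enorm2 (E.mulVec a) := cs _ _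
  rw [enorm2_one hu, one_mul] at hcs
  nlinarith [sq_nonneg (enorm2 a - s), enorm2_nonneg a]

lemma achieve {d n : ℕ} (E : Matrix (Fin d) (Fin n) ℝ) (v : Fin n → ℝ)
    (hv : ∑ i, v i ^ 2 = 1) (hv0 : E.mulVec v ≠ 0) :
    (∑ i, (E.mulVec v i / enorm2 (E.mulVec v)) ^ 2 = 1) ∧
    frob2 (E - Matrix.vecMulVec (fun i => E.mulVec v i / enorm2 (E.mulVec v))
        (fun j => enorm2 (E.mulVec v) * v j)) = frob2 E - enorm2 (E.mulVec v) ^ 2 := by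
  have hr : 0 < enorm2 (E.mulVec v) := enorm2_pos hv0
  set r := enorm2 (E.mulVec v) with hrdef
  constructor
  · exact unit_normalize hv0
  · rw [frob2_expand, unit_normalize hv0, one_mul]
    have h1 : (fun i => E.mulVec v i / r) ⬝ᵥ E.mulVec (fun j => r * v j) = r ^ 2 := by
      have hm : E.mulVec (fun j => r * v j) = fun i => r * E.mulVec v i := by
        have : (fun j => r * v j) = r • v := by funext j; simp
        rw [this, Matrix.mulVec_smul]; funext i; simp
      rw [hm]
      have : (fun i => E.mulVec v i / r) ⬝ᵥ (fun i => r * E.mulVec v i)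
          = ∑ i, E.mulVec v i ^ 2 := by
        simp only [dotProduct]
        refine Finset.sum_congr rfl fun i _ => ?_
        field_simp
      rw [this, ← sq_enorm2]
    have h2 : ∑ j, (r * v j) ^ 2 = r ^ 2 := by
      have : ∑ j, (r * v j) ^ 2 = r ^ 2 * ∑ j, v j ^ 2 := by
        rw [Finset.mul_sum]; exact Finset.sum_congr rfl fun j _ => by ring
      rw [this, hv, mul_one]
    rw [h1, h2]; ring

theorem stmt9 (d n k : ℕ) (hk : 1 ≤ k) (E : Matrix (Fin d) (Fin n) ℝ)
    (dh : Fin d → ℝ) (ah : Fin n → ℝ)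
    (hd : ∑ i, dh i ^ 2 = 1) (ha : spars ah ≤ k) (hEa : E.mulVec ah ≠ 0) :
    (∀ (u : Fin d → ℝ) (a : Fin n → ℝ), ∑ i, u i ^ 2 = 1 → spars a ≤ k →
        frob2 (E - Matrix.vecMulVec dh ah) ≤ frob2 (E - Matrix.vecMulVec u a)) ↔
    ((∑ i, (fun j => ah j / enorm2 ah) i ^ 2 = 1 ∧ spars (fun j => ah j / enorm2 ah) ≤ k) ∧
      (∀ v : Fin n → ℝ, ∑ i, v i ^ 2 = 1 → spars v ≤ k →
        v ⬝ᵥ (Eᵀ * E).mulVec v ≤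
          (fun j => ah j / enorm2 ah) ⬝ᵥ (Eᵀ * E).mulVec (fun j => ah j / enorm2 ah)) ∧
      dh = (fun i => E.mulVec (fun j => ah j / enorm2 ah) i /
              enorm2 (E.mulVec (fun j => ah j / enorm2 ah))) ∧
      ah = (fun j => enorm2 (E.mulVec (fun j' => ah j' / enorm2 ah)) * (ah j / enorm2 ah))) := by
  have hah0 : ah ≠ 0 := fun h => hEa (by rw [h]; exact Matrix.mulVec_zero E)
  set t := enorm2 ah with htdef
  have ht : 0 < t := enorm2_pos hah0
  set w : Fin n → ℝ := fun j => ah j / t with hwdef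
  have hw2 : ∑ i, w i ^ 2 = 1 := unit_normalize hah0
  have hws : spars w ≤ k := by rw [hwdef, spars_div ah t ht.ne']; exact ha
  have hawt : ah = fun j => t * w j := by
    funext j; rw [hwdef]; field_simp
  have hEwt : E.mulVec ah = fun i => t * E.mulVec w i := by
    conv_lhs => rw [hawt]
    have : (fun j => t * w j) = t • w := by funext j; simp
    rw [this, Matrix.mulVec_smul]; funext i; simp
  have hEw0 : E.mulVec w ≠ 0 := by
    intro h
    apply hEa
    rw [hEwt, h]; funext i; simp
  set s := enorm2 (E.mulVec w) with hsdef
  have hs : 0 < s := enorm2_pos hEw0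
  have hEats : enorm2 (E.mulVec ah) = t * s := by
    rw [hEwt, enorm2_smul t ht.le]
  have hquadw : w ⬝ᵥ (Eᵀ * E).mulVec w = s ^ 2 := quad_enorm2 E w
  constructor
  · intro h
    -- upper bound: f(dh,ah) ≤ frob2 E - s^2
    obtain ⟨hu1, hval1⟩ := achieve E w hw2 hEw0
    have hsp1 : spars (fun j => s * w j) ≤ k := by rw [spars_smul s hs.ne']; exact hws
    have hupper : frob2 (E - Matrix.vecMulVec dh ah) ≤ frob2 E - s ^ 2 := by
      have := h (fun i => E.mulVec w i / s) (fun j => s * w j) hu1 hsp1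
      rw [hval1] at this; exact this
    have hlower : frob2 E - s ^ 2 ≤ frob2 (E - Matrix.vecMulVec dh ah) :=
      lower_bound E dh ah hd s hs.le (by rw [hEats, ← htdef, mul_comm])
    have hfd : frob2 (E - Matrix.vecMulVec dh ah) = frob2 E - s ^ 2 :=
      le_antisymm hupper hlower
    -- derive equality conditions
    have hexp : frob2 E - 2 * (dh ⬝ᵥ E.mulVec ah) + t ^ 2 = frob2 E - s ^ 2 := by
      have := frob2_expand E dh ah
      rw [hd, one_mul, ← sq_enorm2 ah, ← htdef] at this
      rw [← this, hfd]
    have hcs : dh ⬝ᵥ E.mulVec ah ≤ t * s := by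
      have := cs dh (E.mulVec ah)
      rw [enorm2_one hd, one_mul, hEats] at this; exact this
    have hts : t = s := by nlinarith
    have hpeq : dh ⬝ᵥ E.mulVec ah = enorm2 (E.mulVec ah) := by
      rw [hEats]; nlinarith
    have hdh : dh = fun i => E.mulVec ah i / enorm2 (E.mulVec ah) := cs_eq hd hEa hpeq
    refine ⟨⟨hw2, hws⟩, ?_, ?_, ?_⟩
    · intro v hv hvs
      rw [hquadw, quad_enorm2]
      by_cases hEv : E.mulVec v = 0
      · rw [hEv]
        have : enorm2 (0 : Fin d → ℝ) = 0 := by unfold enorm2; simp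
        rw [this]; simpa using sq_nonneg s
      · obtain ⟨hu0, hval0⟩ := achieve E v hv hEv
        have hsp0 : spars (fun j => enorm2 (E.mulVec v) * v j) ≤ k := by
          rw [spars_smul _ (enorm2_pos hEv).ne']; exact hvs
        have := h (fun i => E.mulVec v i / enorm2 (E.mulVec v))
          (fun j => enorm2 (E.mulVec v) * v j) hu0 hsp0
        rw [hval0, hfd] at this
        linarith
    · rw [hdh]
      funext i
      rw [hEats, hEwt]
      field_simp
    · funext j
      rw [← hts]
      field_simp
  · rintro ⟨⟨hw2', hws'⟩, hmax, hdh, hah⟩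
    intro u a hu has
    -- t = s
    have hts : t = s := by
      have h1 : ∑ j, ah j ^ 2 = s ^ 2 := by
        conv_lhs => rw [hah]
        have : ∑ j, (s * (ah j / t)) ^ 2 = s ^ 2 * ∑ j, w j ^ 2 := by
          rw [Finset.mul_sum]; exact Finset.sum_congr rfl fun j _ => by rw [hwdef]; ring
        rw [this, hw2, mul_one]
      have h2 : t ^ 2 = s ^ 2 := by rw [sq_enorm2 ah] at *; rw [← htdef] at *; linarith [h1]
      nlinarith
    -- value at (dh, ah)
    have hval : frob2 (E - Matrix.vecMulVec dh ah) = frob2 E - s ^ 2 := by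
      rw [frob2_expand, hd, one_mul, ← sq_enorm2 ah, ← htdef, hts]
      have hp : dh ⬝ᵥ E.mulVec ah = s ^ 2 := by
        rw [hdh, hEwt]
        have : (fun i => E.mulVec w i / s) ⬝ᵥ (fun i => t * E.mulVec w i)
            = (t / s) * ∑ i, E.mulVec w i ^ 2 := by
          simp only [dotProduct, Finset.mul_sum]
          refine Finset.sum_congr rfl fun i _ => ?_
          field_simp
        rw [this, ← sq_enorm2, ← hsdef, hts]
        field_simp
      rw [hp]; ring
    rw [hval]
    -- lower bound for any (u,a)
    by_cases ha0 : a = 0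
    · rw [ha0]
      have h0 : E.mulVec (0 : Fin n → ℝ) = 0 := Matrix.mulVec_zero E
      refine lower_bound E u 0 hu s hs.le ?_
      rw [h0]
      have : enorm2 (0 : Fin d → ℝ) = 0 := by unfold enorm2; simp
      have h0' : enorm2 (0 : Fin n → ℝ) = 0 := by unfold enorm2; simp
      rw [this, h0', mul_zero]
    · set τ := enorm2 a with hτdef
      have hτ : 0 < τ := enorm2_pos ha0
      set v : Fin n → ℝ := fun j => a j / τ with hvdef
      have hv2 : ∑ i, v i ^ 2 = 1 := unit_normalize ha0
      have hvs : spars v ≤ k := by rw [hvdef, spars_div a τ hτ.ne']; exact has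
      have hEv : enorm2 (E.mulVec v) ^ 2 ≤ s ^ 2 := by
        have := hmax v hv2 hvs
        rw [quad_enorm2, quad_enorm2] at this
        exact this
      have hEvs : enorm2 (E.mulVec v) ≤ s := by
        have h' := Real.sqrt_le_sqrt hEv
        rwa [Real.sqrt_sq (enorm2_nonneg _), Real.sqrt_sq hs.le] at h'
      refine lower_bound E u a hu s hs.le ?_
      have havt : a = fun j => τ * v j := by funext j; rw [hvdef]; field_simp
      have hEat : E.mulVec a = fun i => τ * E.mulVec v i := by
        funext i
        conv_lhs => rw [havt]
        simp only [Matrix.mulVec, dotProduct, Finset.mul_sum]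
        exact Finset.sum_congr rfl fun j _ => by ring
      rw [hEat, enorm2_smul τ hτ.le]
      calc τ * enorm2 (E.mulVec v) ≤ τ * s := mul_le_mul_of_nonneg_left hEvs hτ.le
        _ = s * τ := mul_comm _ _
end

section
/- Let E ∈ R^{d×n} and k ≥ 1. If ŵ maximizes w ↦ wᵀEᵀEw over the set S_k = {w ∈ R^n : ‖w‖₂ = 1, ‖w‖₀ ≤ k} (which is nonempty and compact, so a maximizer exists), then for any (d, α) with ‖d‖₂ = 1 and ‖α‖₀ ≤ k, we have ‖E − (Eŵ/‖Eŵ‖₂)(‖Eŵ‖₂ŵ)ᵀ‖_F² ≤ ‖E − dαᵀ‖_F², provided Eŵ ≠ 0. -/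
open Matrix BigOperators

noncomputable def enorm {n : ℕ} (v : Fin n → ℝ) : ℝ :=
  Real.sqrt (∑ i, v i ^ 2)

lemma frob2_sub_vecMulVec {d n : ℕ} (E : Matrix (Fin d) (Fin n) ℝ)
    (u : Fin d → ℝ) (a : Fin n → ℝ) :
    frob2 (E - Matrix.vecMulVec u a) =
      frob2 E - 2 * ∑ i, u i * (E.mulVec a i) + (∑ i, u i ^ 2) * (∑ j, a j ^ 2) := by
  have h1 : (∑ i, u i ^ 2) * (∑ j, a j ^ 2) = ∑ i, ∑ j, u i ^ 2 * a j ^ 2 :=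
    Finset.sum_mul_sum _ _ _ _
  have h2 : ∑ i, u i * E.mulVec a i = ∑ i, ∑ j, u i * (E i j * a j) := by
    simp [Matrix.mulVec, dotProduct, Finset.mul_sum]
  rw [frob2, frob2, h1, h2, Finset.mul_sum, ← Finset.sum_sub_distrib,
    ← Finset.sum_add_distrib]
  refine Finset.sum_congr rfl fun i _ => ?_
  rw [Finset.mul_sum, ← Finset.sum_sub_distrib, ← Finset.sum_add_distrib]
  refine Finset.sum_congr rfl fun j _ => ?_
  simp only [Matrix.sub_apply, Matrix.vecMulVec_apply]
  ring

theorem stmt15 (d n k : ℕ) (hk1 : 1 ≤ k) (hkn : k ≤ n) (E : Matrix (Fin d) (Fin n) ℝ)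
    (w : Fin n → ℝ) (hw : ∑ i, w i ^ 2 = 1) (hws : spars w ≤ k)
    (hmax : ∀ v : Fin n → ℝ, ∑ i, v i ^ 2 = 1 → spars v ≤ k →
        v ⬝ᵥ (Eᵀ * E).mulVec v ≤ w ⬝ᵥ (Eᵀ * E).mulVec w)
    (hEw : E.mulVec w ≠ 0) :
    ∀ (u : Fin d → ℝ) (a : Fin n → ℝ), ∑ i, u i ^ 2 = 1 → spars a ≤ k →
      frob2 (E - Matrix.vecMulVec (fun i => E.mulVec w i / _root_.enorm (E.mulVec w))
          (fun j => _root_.enorm (E.mulVec w) * w j)) ≤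
        frob2 (E - Matrix.vecMulVec u a) := by
  intro u a hu ha
  set f := E.mulVec w with hf
  set F := ∑ i, f i ^ 2 with hFdef
  set A := ∑ j, a j ^ 2 with hAdef
  have hF0 : 0 < F := by
    rcases Function.ne_iff.mp hEw with ⟨i, hi⟩
    have h1 : 0 < f i ^ 2 := (sq_nonneg _).lt_of_ne (Ne.symm (pow_ne_zero 2 hi))
    rw [hFdef]
    exact h1.trans_le (Finset.single_le_sum (f := fun j => f j ^ 2) (fun j _ => sq_nonneg _) (Finset.mem_univ i))
  have hA0 : 0 ≤ A := Finset.sum_nonneg fun j _ => sq_nonneg _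
  have hN : _root_.enorm f ≠ 0 := by
    simp only [_root_.enorm]
    positivity
  -- rewrite the candidate matrix
  have hmat : Matrix.vecMulVec (fun i => f i / _root_.enorm f) (fun j => _root_.enorm f * w j)
      = Matrix.vecMulVec f w := by
    ext i j
    simp only [Matrix.vecMulVec_apply]
    field_simp
  rw [hmat, frob2_sub_vecMulVec, frob2_sub_vecMulVec, hu, ← hf]
  have hff : ∑ i, f i * E.mulVec w i = F := by
    rw [← hf, hFdef]; exact Finset.sum_congr rfl fun i _ => (sq (f i)).symm
  rw [hff, ← hAdef, ← hFdef]
  -- key: ∑ (E a)^2 ≤ A * F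
  have hkey : ∑ i, (E.mulVec a i) ^ 2 ≤ A * F := by
    rcases eq_or_lt_of_le hA0 with hA | hA
    · have ha0 : a = 0 := by
        funext j
        have : ∀ j ∈ Finset.univ, a j ^ 2 = 0 := by
          intro j _
          exact (Finset.sum_eq_zero_iff_of_nonneg (fun j _ => sq_nonneg _)).mp hA.symm j
            (Finset.mem_univ j)
        have := this j (Finset.mem_univ j)
        exact pow_eq_zero_iff (two_ne_zero) |>.mp this
      simp [ha0, Matrix.mulVec_zero, ← hA]
    · set v : Fin n → ℝ := fun j => a j / Real.sqrt A with hv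
      have hAs : Real.sqrt A ^ 2 = A := Real.sq_sqrt hA0
      have hAs0 : Real.sqrt A ≠ 0 := by positivity
      have hv1 : ∑ j, v j ^ 2 = 1 := by
        simp only [hv, div_pow, ← Finset.sum_div, hAs, ← hAdef]
        field_simp
      have hvs : spars v ≤ k := by
        refine le_trans (le_of_eq ?_) ha
        unfold spars
        exact Nat.card_congr (Equiv.subtypeEquivRight fun j => by
          simp [hv, div_eq_zero_iff, hAs0])
      have hle := hmax v hv1 hvs
      rw [quad_eq, quad_eq, ← hf, ← hFdef] at hle
      have hav : a = fun j => Real.sqrt A * v j := by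
        funext j; rw [hv]; field_simp
      have hma : E.mulVec a = fun i => Real.sqrt A * E.mulVec v i := by
        rw [hav]
        have : (fun j => Real.sqrt A * v j) = Real.sqrt A • v := rfl
        rw [this, Matrix.mulVec_smul]
        rfl
      calc ∑ i, (E.mulVec a i) ^ 2 = A * ∑ i, (E.mulVec v i) ^ 2 := by
            rw [hma, Finset.mul_sum]
            exact Finset.sum_congr rfl fun i _ => by rw [mul_pow, hAs]
        _ ≤ A * F := by exact mul_le_mul_of_nonneg_left hle hA0
  -- Cauchy-Schwarz: S ≤ sqrt (A * F)
  set S := ∑ i, u i * E.mulVec a i with hS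
  have hS2 : S ^ 2 ≤ A * F := by
    calc S ^ 2 ≤ (∑ i, u i ^ 2) * (∑ i, (E.mulVec a i) ^ 2) :=
          Finset.sum_mul_sq_le_sq_mul_sq _ _ _
      _ = ∑ i, (E.mulVec a i) ^ 2 := by rw [hu, one_mul]
      _ ≤ A * F := hkey
  have h2S : 2 * S ≤ A + F := by
    have h1 : S ≤ Real.sqrt (A * F) := by
      calc S ≤ |S| := le_abs_self S
        _ = Real.sqrt (S ^ 2) := (Real.sqrt_sq_eq_abs S).symm
        _ ≤ Real.sqrt (A * F) := Real.sqrt_le_sqrt hS2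
    have h2 : 2 * Real.sqrt (A * F) ≤ A + F := by
      have := two_mul_le_add_sq (Real.sqrt A) (Real.sqrt F)
      rw [Real.sq_sqrt hA0, Real.sq_sqrt hF0.le] at this
      rw [Real.sqrt_mul hA0]
      linarith
    linarith
  nlinarith [hF0, hA0]
end
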